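/- Let φ_1, φ_2, φ_3: [0,∞) → (0,∞) be continuous and strictly decreasing and let α_1, α_2, α_3 > 0. For each j ∈ {1,2,3}, let x_j(s) denote the unique nonnegative solution of x = α_j · φ_j(x + s) (which exists for every s ≥ 0 and depends continuously and strictly decreasingly on s). Then there exists a unique S > 0 satisfying S = x_1(S) + x_2(S) + x_3(S). -/

import Mathlib

theorem stmt11 (φ : Fin 3 → ℝ → ℝ) (α : Fin 3 → ℝ) (hα : ∀ j, 0 < α j)
    (hφpos : ∀ j x, 0 ≤ x → 0 < φ j x)
    (hφcont : ∀ j, ContinuousOn (φ j) (Set.Ici 0))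
    (hφanti : ∀ j, StrictAntiOn (φ j) (Set.Ici 0))
    (x : Fin 3 → ℝ → ℝ)
    (hx : ∀ j : Fin 3, ∀ s : ℝ, 0 ≤ s →
      (0 < x j s ∧ x j s = α j * φ j (x j s + s) ∧
        ∀ y : ℝ, 0 ≤ y → y = α j * φ j (y + s) → y = x j s))
    (hxanti : ∀ j, StrictAntiOn (x j) (Set.Ici 0))
    (hxcont : ∀ j, ContinuousOn (x j) (Set.Ici 0)) :
    ∃! S : ℝ, 0 < S ∧ S = x 0 S + x 1 S + x 2 S := by
  set g : ℝ → ℝ := fun s => x 0 s + x 1 s + x 2 s with hg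
  have hgpos : ∀ s, 0 ≤ s → 0 < g s := by
    intro s hs
    have h0 := (hx 0 s hs).1
    have h1 := (hx 1 s hs).1
    have h2 := (hx 2 s hs).1
    simp only [hg]
    linarith
  have hganti : StrictAntiOn g (Set.Ici 0) := by
    intro a ha b hb hab
    have h0 := hxanti 0 ha hb hab
    have h1 := hxanti 1 ha hb hab
    have h2 := hxanti 2 ha hb hab
    simp only [hg]
    linarith
  have hgcont : ContinuousOn g (Set.Ici 0) :=
    ((hxcont 0).add (hxcont 1)).add (hxcont 2)
  set F : ℝ → ℝ := fun s => s - g s with hF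
  have hFmono : StrictMonoOn F (Set.Ici 0) := by
    intro a ha b hb hab
    have := hganti ha hb hab
    simp only [hF]
    linarith
  set b : ℝ := g 0 + 1 with hb
  have hg0 : 0 < g 0 := hgpos 0 le_rfl
  have hbpos : (0:ℝ) < b := by linarith
  have hFb : 0 < F b := by
    have : g b < g 0 := hganti (Set.mem_Ici.mpr (le_refl 0)) hbpos.le hbpos
    simp only [hF]; linarith
  have hF0 : F 0 < 0 := by simp only [hF]; linarith
  have hFcont : ContinuousOn F (Set.Icc 0 b) :=
    (continuousOn_id.sub (hgcont.mono (Set.Icc_subset_Ici_self)))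
  have hIVT := intermediate_value_Icc hbpos.le hFcont
  have hmem : (0:ℝ) ∈ Set.Icc (F 0) (F b) := ⟨hF0.le, hFb.le⟩
  obtain ⟨S, hS, hFS⟩ := hIVT hmem
  refine ⟨S, ⟨?_, ?_⟩, ?_⟩
  · have h : S - (x 0 S + x 1 S + x 2 S) = 0 := hFS
    have : S = g S := by simp only [hg]; linarith
    have := hgpos S hS.1
    linarith
  · have h : S - (x 0 S + x 1 S + x 2 S) = 0 := hFS
    linarith
  · intro T ⟨hTpos, hTeq⟩
    have hFT : F T = 0 := by
      show T - (x 0 T + x 1 T + x 2 T) = 0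
      linarith
    have hFS0 : F S = 0 := hFS
    exact hFmono.injOn hTpos.le hS.1 (by rw [hFT, hFS0])
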